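/- Let D̂ ⊂ ℝ^d (d ∈ {2,3}) be a bounded open set and 𝔗 a compact subset of Lip_b(D̂;ℝ^d) such that every r ∈ 𝔗 is injective and satisfies ‖r(x)−r(y)‖ ≥ c_r‖x−y‖ for all x,y ∈ D̂ and some c_r > 0. Then there exist δ = δ(𝔗) > 0 and ζ(δ,𝔗) > 0 such that for every r in 𝔗_δ (the open δ-neighborhood of 𝔗 in Lip_b(D̂;ℂ^d)) and every pair x,y ∈ D̂ with x ≠ y, Re[(r(x)−r(y))·(r(x)−r(y))] ≥ ζ(δ,𝔗)·‖x−y‖², where w·w := Σᵢ wᵢ² is the complex-bilinear dot product on ℂ^d. -/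

import Mathlib

noncomputable section

open MeasureTheory Complex Metric Set

set_option linter.unusedSectionVars false

/-- The complex-bilinear dot product `w · w = ∑ i, wᵢ²` on `ℂ^d`. -/
def cdot {d : ℕ} (w : EuclideanSpace ℂ (Fin d)) : ℂ := ∑ i, w i * w i

/-- The principal branch of the complex square root. -/
def csqrt (z : ℂ) : ℂ := z ^ (1 / 2 : ℂ)

/-- The space of bounded Lipschitz maps from a metric space `α` into a normed space `F`,
normed by `‖f‖ = sup_x ‖f x‖ + Lip(f)`. -/
structure LipBdd (α : Type*) [MetricSpace α] (F : Type*) [NormedAddCommGroup F] where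
  toFun : α → F
  bdd' : ∃ C : ℝ, ∀ x, ‖toFun x‖ ≤ C
  lip' : ∃ K : ℝ, ∀ x y, dist (toFun x) (toFun y) ≤ K * dist x y

namespace LipBdd

variable {α : Type*} [MetricSpace α] {F : Type*} [NormedAddCommGroup F] [NormedSpace ℂ F]

instance : FunLike (LipBdd α F) α F where
  coe f := f.toFun
  coe_injective := by rintro ⟨f, _, _⟩ ⟨g, _, _⟩ h; simpa using h

@[ext] lemma ext {f g : LipBdd α F} (h : ∀ x, f x = g x) : f = g := DFunLike.ext f g h

/-- The least Lipschitz constant of a bounded Lipschitz map. -/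
def lipConst (f : LipBdd α F) : ℝ :=
  sInf {K : ℝ | 0 ≤ K ∧ ∀ x y, dist (f x) (f y) ≤ K * dist x y}

lemma bddAbove_range_norm (f : LipBdd α F) : BddAbove (Set.range fun x => ‖f x‖) := by
  obtain ⟨C, hC⟩ := f.bdd'
  exact ⟨C, by rintro s ⟨x, rfl⟩; exact hC x⟩

lemma lipSet_nonempty (f : LipBdd α F) :
    {K : ℝ | 0 ≤ K ∧ ∀ x y, dist (f x) (f y) ≤ K * dist x y}.Nonempty := by
  obtain ⟨K, hK⟩ := f.lip'
  exact ⟨max K 0, le_max_right _ _, fun x y =>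
    (hK x y).trans (mul_le_mul_of_nonneg_right (le_max_left _ _) dist_nonneg)⟩

lemma lipSet_bddBelow (f : LipBdd α F) :
    BddBelow {K : ℝ | 0 ≤ K ∧ ∀ x y, dist (f x) (f y) ≤ K * dist x y} :=
  ⟨0, fun _ hK => hK.1⟩

lemma lipConst_nonneg (f : LipBdd α F) : 0 ≤ lipConst f :=
  le_csInf (lipSet_nonempty f) fun _ hK => hK.1

lemma dist_le_lipConst (f : LipBdd α F) (x y : α) :
    dist (f x) (f y) ≤ lipConst f * dist x y := by
  rcases eq_or_lt_of_le (dist_nonneg : (0:ℝ) ≤ dist x y) with h | h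
  · obtain ⟨K, hK0, hK⟩ := lipSet_nonempty f
    have h2 := hK x y
    rw [← h] at h2 ⊢
    simpa using h2
  · rw [← div_le_iff₀ h]
    refine le_csInf (lipSet_nonempty f) fun K hK => ?_
    rw [div_le_iff₀ h]
    exact hK.2 x y

instance : Zero (LipBdd α F) :=
  ⟨⟨fun _ => 0, ⟨0, fun x => by simp⟩, ⟨0, fun x y => by simp⟩⟩⟩

@[simp] lemma coe_zero : ⇑(0 : LipBdd α F) = fun _ => (0 : F) := rfl

instance : Add (LipBdd α F) :=
  ⟨fun f g =>
    ⟨fun x => f x + g x, by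
      obtain ⟨Cf, hCf⟩ := f.bdd'
      obtain ⟨Cg, hCg⟩ := g.bdd'
      exact ⟨Cf + Cg, fun x => (norm_add_le _ _).trans (add_le_add (hCf x) (hCg x))⟩, by
      obtain ⟨Kf, hKf⟩ := f.lip'
      obtain ⟨Kg, hKg⟩ := g.lip'
      refine ⟨Kf + Kg, fun x y => (dist_add_add_le _ _ _ _).trans ?_⟩
      rw [add_mul]
      exact add_le_add (hKf x y) (hKg x y)⟩⟩

@[simp] lemma coe_add (f g : LipBdd α F) : ⇑(f + g) = fun x => f x + g x := rfl

instance : Neg (LipBdd α F) :=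
  ⟨fun f =>
    ⟨fun x => -f x, by
      obtain ⟨Cf, hCf⟩ := f.bdd'
      exact ⟨Cf, fun x => by have h : ‖f x‖ ≤ Cf := hCf x; simpa using h⟩, by
      obtain ⟨Kf, hKf⟩ := f.lip'
      exact ⟨Kf, fun x y => by
        have h : dist (f x) (f y) ≤ Kf * dist x y := hKf x y; simpa [dist_neg_neg] using h⟩⟩⟩

@[simp] lemma coe_neg (f : LipBdd α F) : ⇑(-f) = fun x => -f x := rfl

instance : SMul ℂ (LipBdd α F) :=
  ⟨fun c f =>
    ⟨fun x => c • f x, by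
      obtain ⟨Cf, hCf⟩ := f.bdd'
      refine ⟨‖c‖ * Cf, fun x => ?_⟩
      rw [norm_smul]
      exact mul_le_mul_of_nonneg_left (hCf x) (norm_nonneg c), by
      obtain ⟨Kf, hKf⟩ := f.lip'
      refine ⟨‖c‖ * Kf, fun x y => ?_⟩
      rw [dist_smul₀, mul_assoc]
      exact mul_le_mul_of_nonneg_left (hKf x y) (norm_nonneg c)⟩⟩

@[simp] lemma coe_smul (c : ℂ) (f : LipBdd α F) : ⇑(c • f) = fun x => c • f x := rfl

instance : AddCommGroup (LipBdd α F) where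
  add := (· + ·)
  zero := 0
  neg := Neg.neg
  add_assoc f g h := by ext x; exact add_assoc _ _ _
  zero_add f := by ext x; exact zero_add _
  add_zero f := by ext x; exact add_zero _
  neg_add_cancel f := by ext x; exact neg_add_cancel _
  add_comm f g := by ext x; exact add_comm _ _
  nsmul := nsmulRec
  zsmul := zsmulRec

instance : Module ℂ (LipBdd α F) where
  smul := (· • ·)
  one_smul f := by ext x; exact one_smul _ _
  mul_smul a b f := by ext x; exact mul_smul _ _ _
  smul_zero a := by ext x; exact smul_zero _
  smul_add a f g := by ext x; exact smul_add _ _ _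
  add_smul a b f := by ext x; exact add_smul _ _ _
  zero_smul f := by ext x; exact zero_smul _ _

/-- The norm `‖f‖ = sup_x ‖f x‖ + Lip(f)` on bounded Lipschitz maps. -/
noncomputable instance : NormedAddCommGroup (LipBdd α F) :=
  AddGroupNorm.toNormedAddCommGroup
    { toFun := fun f => (⨆ x, ‖f x‖) + lipConst f
      map_zero' := by
        have h1 : (⨆ x : α, ‖(0 : LipBdd α F) x‖) = 0 := by
          simp only [coe_zero, norm_zero]
          rcases isEmpty_or_nonempty α with h | h
          · exact Real.iSup_of_isEmpty _
          · exact ciSup_const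
        have h2 : lipConst (0 : LipBdd α F) = 0 := by
          unfold lipConst
          have hset : {K : ℝ | 0 ≤ K ∧ ∀ x y : α,
              dist ((0 : LipBdd α F) x) ((0 : LipBdd α F) y) ≤ K * dist x y} = Set.Ici 0 := by
            ext K
            simp only [Set.mem_setOf_eq, coe_zero, dist_self, Set.mem_Ici]
            exact ⟨fun h => h.1, fun h => ⟨h, fun x y => mul_nonneg h dist_nonneg⟩⟩
          rw [hset, csInf_Ici]
        simp only [h1, h2, add_zero]
      add_le' := by
        intro f g
        have hsup : (⨆ x : α, ‖(f + g) x‖) ≤ (⨆ x, ‖f x‖) + ⨆ x, ‖g x‖ := by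
          refine Real.iSup_le (fun x => ?_)
            (add_nonneg (Real.iSup_nonneg fun x => norm_nonneg _)
              (Real.iSup_nonneg fun x => norm_nonneg _))
          calc ‖f x + g x‖ ≤ ‖f x‖ + ‖g x‖ := norm_add_le _ _
            _ ≤ _ := add_le_add (le_ciSup (bddAbove_range_norm f) x)
                  (le_ciSup (bddAbove_range_norm g) x)
        have hlip : lipConst (f + g) ≤ lipConst f + lipConst g := by
          refine csInf_le (lipSet_bddBelow _)
            ⟨add_nonneg (lipConst_nonneg f) (lipConst_nonneg g), fun x y => ?_⟩
          calc dist ((f + g) x) ((f + g) y)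
              ≤ dist (f x) (f y) + dist (g x) (g y) := dist_add_add_le _ _ _ _
            _ ≤ lipConst f * dist x y + lipConst g * dist x y :=
                add_le_add (dist_le_lipConst f x y) (dist_le_lipConst g x y)
            _ = (lipConst f + lipConst g) * dist x y := (add_mul _ _ _).symm
        linarith
      neg' := by
        intro f
        have h1 : (⨆ x : α, ‖(-f) x‖) = ⨆ x, ‖f x‖ := by
          simp only [coe_neg, norm_neg]
        have h2 : lipConst (-f) = lipConst f := by
          unfold lipConst
          congr 1
          ext K
          simp only [Set.mem_setOf_eq, coe_neg, dist_neg_neg]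
        simp only [h1, h2]
      eq_zero_of_map_eq_zero' := by
        intro f hf
        have h1 : 0 ≤ ⨆ x : α, ‖f x‖ := Real.iSup_nonneg fun x => norm_nonneg _
        have h2 : 0 ≤ lipConst f := lipConst_nonneg f
        have hsup : (⨆ x : α, ‖f x‖) = 0 := by linarith
        ext x
        have hle := le_ciSup (bddAbove_range_norm f) x
        rw [hsup] at hle
        have hx : f x = 0 := norm_le_zero_iff.mp hle
        simpa using hx }

noncomputable instance : NormedSpace ℂ (LipBdd α F) where
  norm_smul_le := by
    intro c f
    have hsup : (⨆ x : α, ‖(c • f) x‖) ≤ ‖c‖ * ⨆ x, ‖f x‖ := by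
      refine Real.iSup_le (fun x => ?_)
        (mul_nonneg (norm_nonneg _) (Real.iSup_nonneg fun x => norm_nonneg _))
      calc ‖(c • f) x‖ = ‖c‖ * ‖f x‖ := norm_smul _ _
        _ ≤ _ := mul_le_mul_of_nonneg_left (le_ciSup (bddAbove_range_norm f) x) (norm_nonneg c)
    have hlip : lipConst (c • f) ≤ ‖c‖ * lipConst f := by
      refine csInf_le (lipSet_bddBelow _)
        ⟨mul_nonneg (norm_nonneg _) (lipConst_nonneg f), fun x y => ?_⟩
      calc dist ((c • f) x) ((c • f) y) = ‖c‖ * dist (f x) (f y) := dist_smul₀ _ _ _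
        _ ≤ ‖c‖ * (lipConst f * dist x y) :=
            mul_le_mul_of_nonneg_left (dist_le_lipConst f x y) (norm_nonneg c)
        _ = ‖c‖ * lipConst f * dist x y := (mul_assoc _ _ _).symm
    have hn : ‖c • f‖ = (⨆ x : α, ‖(c • f) x‖) + lipConst (c • f) := rfl
    have hn' : ‖f‖ = (⨆ x : α, ‖f x‖) + lipConst f := rfl
    rw [hn, hn', mul_add]
    exact add_le_add hsup hlip

end LipBdd

/-- The open `δ`-neighborhood of a set `T` in a normed space; for
`T ⊆ Lip_b(D̂;ℝ^d) ⊆ Lip_b(D̂;ℂ^d)` this is the complex neighborhood `𝔗_δ`. -/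
def cnbhd {X : Type*} [NormedAddCommGroup X] (T : Set X) (δ : ℝ) : Set X :=
  {r : X | ∃ r' ∈ T, ‖r - r'‖ < δ}

/-- A complex-vector-valued map is real-valued if all its values have vanishing
imaginary parts; `Lip_b(D̂;ℝ^d)` is identified with the set of real-valued elements of
`Lip_b(D̂;ℂ^d)`. -/
def IsRealValued {α : Type*} [MetricSpace α] {d : ℕ}
    (f : LipBdd α (EuclideanSpace ℂ (Fin d))) : Prop :=
  ∀ x, ∀ i, (f x i).im = 0


namespace LipBdd
variable {α : Type*} [MetricSpace α] {F : Type*} [NormedAddCommGroup F] [NormedSpace ℂ F]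

lemma coe_sub (f g : LipBdd α F) : ⇑(f - g) = fun x => f x - g x := by
  funext x; simp [sub_eq_add_neg]

lemma lipConst_le_norm (f : LipBdd α F) : lipConst f ≤ ‖f‖ := by
  have h : ‖f‖ = (⨆ x : α, ‖f x‖) + lipConst f := rfl
  have h2 : (0:ℝ) ≤ ⨆ x : α, ‖f x‖ := Real.iSup_nonneg fun x => norm_nonneg _
  linarith

lemma norm_sub_apply_le (f : LipBdd α F) (x y : α) : ‖f x - f y‖ ≤ ‖f‖ * dist x y := by
  have h := f.dist_le_lipConst x y
  rw [dist_eq_norm] at h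
  exact h.trans (mul_le_mul_of_nonneg_right (lipConst_le_norm f) dist_nonneg)

end LipBdd

lemma cdot_re {d : ℕ} (w : EuclideanSpace ℂ (Fin d)) :
    (cdot w).re = ∑ i, ((w i).re ^ 2 - (w i).im ^ 2) := by
  unfold cdot
  rw [Complex.re_sum]
  refine Finset.sum_congr rfl fun i _ => ?_
  rw [Complex.mul_re]; ring

lemma norm_sq_eq' {d : ℕ} (w : EuclideanSpace ℂ (Fin d)) :
    ‖w‖ ^ 2 = ∑ i, ((w i).re ^ 2 + (w i).im ^ 2) := by
  rw [EuclideanSpace.norm_eq, Real.sq_sqrt (by positivity)]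
  refine Finset.sum_congr rfl fun i _ => ?_
  rw [Complex.sq_norm, Complex.normSq_apply]; ring

set_option maxHeartbeats 1600000 in
/-- Let `D̂ ⊂ ℝ^d` (`d ∈ {2,3}`) be a bounded open set and `𝔗` a compact
set of real-valued bounded Lipschitz transformations, each injective and satisfying
`‖r(x)−r(y)‖ ≥ c_r ‖x−y‖`.  Then there are `δ > 0` and `ζ > 0` such that for every `r` in
the complex `δ`-neighborhood `𝔗_δ` and all `x ≠ y` in `D̂`,
`Re[(r(x)−r(y))·(r(x)−r(y))] ≥ ζ ‖x−y‖²`. -/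
theorem real_part_bilinear_dot_lower_bound
    {d : ℕ} (hd : d = 2 ∨ d = 3)
    (Dh : Set (EuclideanSpace ℝ (Fin d))) (hDo : IsOpen Dh) (hDb : Bornology.IsBounded Dh)
    (T : Set (LipBdd ↥Dh (EuclideanSpace ℂ (Fin d))))
    (hTc : IsCompact T)
    (hTreal : ∀ r ∈ T, IsRealValued r)
    (hTinj : ∀ r ∈ T, Function.Injective ⇑r)
    (hTlow : ∀ r ∈ T, ∃ c : ℝ, 0 < c ∧ ∀ x y : ↥Dh, c * dist x y ≤ ‖r x - r y‖) :
    ∃ δ > (0 : ℝ), ∃ ζ > (0 : ℝ), ∀ r ∈ cnbhd T δ, ∀ x y : ↥Dh, x ≠ y →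
      ζ * dist x y ^ 2 ≤ (cdot (r x - r y)).re := by
  -- Step 1: a uniform lower Lipschitz constant on T.
  obtain ⟨c0, hc0, hlow⟩ : ∃ c0 > (0:ℝ), ∀ r' ∈ T, ∀ x y : ↥Dh,
      c0 * dist x y ≤ ‖r' x - r' y‖ := by
    rcases T.eq_empty_or_nonempty with rfl | ⟨r0, hr0⟩
    · exact ⟨1, one_pos, by simp⟩
    choose c hcpos hc using hTlow
    have hcover : T ⊆ ⋃ r : T, Metric.ball (r : LipBdd ↥Dh (EuclideanSpace ℂ (Fin d)))
        (c r r.2 / 2) := by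
      intro r hr
      exact Set.mem_iUnion.mpr ⟨⟨r, hr⟩, by
        simpa using half_pos (hcpos r hr)⟩
    obtain ⟨t, ht⟩ := hTc.elim_finite_subcover _ (fun _ => Metric.isOpen_ball) hcover
    have htne : t.Nonempty := by
      by_contra h
      rw [Finset.not_nonempty_iff_eq_empty] at h
      have := ht hr0
      simp [h] at this
    refine ⟨t.inf' htne (fun i => c i i.2 / 2), ?_, ?_⟩
    · exact (Finset.lt_inf'_iff htne).mpr fun i _ => half_pos (hcpos i i.2)
    · intro r' hr' x y
      obtain ⟨i, hit, hri⟩ := Set.mem_iUnion₂.mp (ht hr')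
      set ri : LipBdd ↥Dh (EuclideanSpace ℂ (Fin d)) := (i : LipBdd ↥Dh (EuclideanSpace ℂ (Fin d))) with hri_def
      rw [Metric.mem_ball, dist_eq_norm] at hri
      have h1 : c i i.2 * dist x y ≤ ‖ri x - ri y‖ := hc i i.2 x y
      have h2 : ‖(r' - ri) x - (r' - ri) y‖ ≤ ‖r' - ri‖ * dist x y :=
        LipBdd.norm_sub_apply_le _ x y
      rw [LipBdd.coe_sub] at h2
      simp only at h2
      have h3 : ‖ri x - ri y‖ - ‖(r' x - ri x) - (r' y - ri y)‖ ≤ ‖r' x - r' y‖ := by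
        have hle := norm_sub_norm_le (ri x - ri y) ((ri x - r' x) - (ri y - r' y))
        have he : ri x - ri y - ((ri x - r' x) - (ri y - r' y)) = r' x - r' y := by abel
        rw [he] at hle
        have hn : ‖ri x - r' x - (ri y - r' y)‖ = ‖(r' x - ri x) - (r' y - ri y)‖ := by
          rw [← norm_neg]; congr 1; abel
        rw [hn] at hle
        exact hle
      have h4 : ‖r' - ri‖ * dist x y ≤ c i i.2 / 2 * dist x y :=
        mul_le_mul_of_nonneg_right hri.le dist_nonneg
      have h5 : t.inf' htne (fun j => c j j.2 / 2) ≤ c i i.2 / 2 :=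
        Finset.inf'_le _ hit
      have h6 : t.inf' htne (fun j => c j j.2 / 2) * dist x y ≤ c i i.2 / 2 * dist x y :=
        mul_le_mul_of_nonneg_right h5 dist_nonneg
      nlinarith [dist_nonneg (x := x) (y := y)]
  -- Step 2: choose δ and ζ.
  refine ⟨c0 / 4, by positivity, c0 ^ 2 / 4, by positivity, ?_⟩
  rintro r ⟨r', hr', hrr'⟩ x y _
  set u := r' x - r' y with hu_def
  set w := r x - r y with hw_def
  set v := w - u with hv_def
  have hwu : ∀ i, w i = u i + v i := by
    intro i
    simp [hv_def]
  have himu : ∀ i, (u i).im = 0 := by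
    intro i
    have h1 := hTreal r' hr' x i
    have h2 := hTreal r' hr' y i
    simp [hu_def, Complex.sub_im, h1, h2]
  have hunorm : c0 * dist x y ≤ ‖u‖ := hlow r' hr' x y
  have hvnorm : ‖v‖ ≤ c0 / 4 * dist x y := by
    have h2 : ‖(r - r') x - (r - r') y‖ ≤ ‖r - r'‖ * dist x y :=
      LipBdd.norm_sub_apply_le _ x y
    rw [LipBdd.coe_sub] at h2
    simp only at h2
    have he : v = (r x - r' x) - (r y - r' y) := by
      rw [hv_def, hw_def, hu_def]; abel
    rw [he]
    exact h2.trans (mul_le_mul_of_nonneg_right hrr'.le dist_nonneg)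
  -- pointwise estimate and summation
  have key : ∑ i, ((u i).re ^ 2 / 2 - 2 * ((v i).re ^ 2 + (v i).im ^ 2)) ≤ (cdot w).re := by
    rw [cdot_re]
    refine Finset.sum_le_sum fun i _ => ?_
    have hre : (w i).re = (u i).re + (v i).re := by rw [hwu i, Complex.add_re]
    have him : (w i).im = (v i).im := by rw [hwu i, Complex.add_im, himu i, zero_add]
    rw [hre, him]
    nlinarith [sq_nonneg ((u i).re + 2 * (v i).re), sq_nonneg (v i).re, sq_nonneg (v i).im]
  have hA : ‖u‖ ^ 2 = ∑ i, (u i).re ^ 2 := by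
    rw [norm_sq_eq']
    exact Finset.sum_congr rfl fun i _ => by rw [himu i]; ring
  have hsum : ∑ i, ((u i).re ^ 2 / 2 - 2 * ((v i).re ^ 2 + (v i).im ^ 2)) =
      ‖u‖ ^ 2 / 2 - 2 * ‖v‖ ^ 2 := by
    rw [Finset.sum_sub_distrib, ← Finset.sum_div, ← Finset.mul_sum, hA, norm_sq_eq' v]
  rw [hsum] at key
  have husq : (c0 * dist x y) ^ 2 ≤ ‖u‖ ^ 2 := by
    have := mul_nonneg hc0.le (dist_nonneg (x := x) (y := y))
    nlinarith [norm_nonneg u]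
  have hvsq : ‖v‖ ^ 2 ≤ (c0 / 4 * dist x y) ^ 2 := by
    nlinarith [norm_nonneg v]
  nlinarith [dist_nonneg (x := x) (y := y)]
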